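/- Let λ = (λ_1,...,λ_m) be a partition and μ = (0,1,...,m-1). Then the specialization \overline{I}_{λ-μ} of the generalized Ferrers ideal I_{λ-μ}, namely the ideal of K[x_1,...,x_n] generated by all x_i x_j with i ≤ j ≤ λ_i and 1 ≤ i ≤ m, is a strongly stable monomial ideal. -/
import Mathlib


open MvPolynomial

lemma key_le {n : ℕ} (s a : Fin n →₀ ℕ) (i j : Fin n) (hji : j ≠ i)
    (hsa : s ≤ a) (hsi : 1 ≤ s i) :
    s - Finsupp.single i 1 + Finsupp.single j 1 ≤
      a - Finsupp.single i 1 + Finsupp.single j 1 := by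
  rw [Finsupp.le_def] at hsa ⊢
  intro k
  have h1 := hsa k
  have h2 := hsa i
  simp only [Finsupp.add_apply, Finsupp.tsub_apply, Finsupp.single_apply]
  split_ifs <;> omega

lemma key_le0 {n : ℕ} (s a : Fin n →₀ ℕ) (i j : Fin n) (hji : j ≠ i)
    (hsa : s ≤ a) (hsi : s i = 0) :
    s ≤ a - Finsupp.single i 1 + Finsupp.single j 1 := by
  rw [Finsupp.le_def] at hsa ⊢
  intro k
  have h1 := hsa k
  simp only [Finsupp.add_apply, Finsupp.tsub_apply, Finsupp.single_apply]
  rcases eq_or_ne k i with rfl | hk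
  · simp only [if_pos rfl] at *
    split_ifs <;> omega
  · have : (if i = k then 1 else 0) = 0 := by simp [Ne.symm hk]
    rw [this]
    split_ifs <;> omega


/-- for a partition `λ = (λ 0 ≥ … ≥ λ (m-1))` with `λ i > i` and
`μ = (0,1,…,m-1)`, the specialization of the generalized Ferrers ideal `I_{λ-μ}`, namely
the ideal of `K[x₁,…,xₙ]` generated by the monomials `x_i x_j` with (0-based indices)
`i ≤ j < λ i` and `i < m`, is a strongly stable monomial ideal: whenever a monomial
`x^a ∈ I` is divisible by `x_i` and `j < i`, the monomial `x_j · x^a / x_i` is in `I`. -/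
theorem specialization_strongly_stable {m n : ℕ} {K : Type*} [Field K]
    (hm : 0 < m) (hmn : m ≤ n)
    (lam : ℕ → ℕ)
    (hanti : ∀ i j : ℕ, i ≤ j → j < m → lam j ≤ lam i)
    (hbound : ∀ i : ℕ, i < m → lam i ≤ n)
    (hlow : ∀ i : ℕ, i < m → i < lam i)
    (I : Ideal (MvPolynomial (Fin n) K))
    (hI : I = Ideal.span ((fun p : Fin n × Fin n =>
        monomial (Finsupp.single p.1 1 + Finsupp.single p.2 1) (1 : K)) ''
      {p | (p.1 : ℕ) < m ∧ p.1 ≤ p.2 ∧ (p.2 : ℕ) < lam (p.1 : ℕ)})) :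
    ∀ a : Fin n →₀ ℕ, monomial a (1 : K) ∈ I →
      ∀ i : Fin n, a i ≠ 0 → ∀ j : Fin n, j < i →
        monomial (a - Finsupp.single i 1 + Finsupp.single j 1) (1 : K) ∈ I := by
  classical
  intro a ha i hi j hji
  have himg : ((fun p : Fin n × Fin n =>
        monomial (Finsupp.single p.1 1 + Finsupp.single p.2 1) (1 : K)) ''
      {p | (p.1 : ℕ) < m ∧ p.1 ≤ p.2 ∧ (p.2 : ℕ) < lam (p.1 : ℕ)}) =
      ((fun s => monomial s (1 : K)) ''
        ((fun p : Fin n × Fin n => Finsupp.single p.1 1 + Finsupp.single p.2 1) ''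
          {p | (p.1 : ℕ) < m ∧ p.1 ≤ p.2 ∧ (p.2 : ℕ) < lam (p.1 : ℕ)})) := by
    rw [Set.image_image]
  rw [hI, himg, mem_ideal_span_monomial_image] at ha ⊢
  intro d hd
  rw [support_monomial, if_neg (one_ne_zero)] at hd
  simp only [Finset.mem_singleton] at hd
  subst hd
  obtain ⟨s, hs, hsa⟩ := ha a (by rw [support_monomial, if_neg one_ne_zero]; simp)
  obtain ⟨⟨u, v⟩, ⟨hum, huv, hvl⟩, rfl⟩ := hs
  simp only at hsa hum huv hvl ⊢
  set s : Fin n →₀ ℕ := Finsupp.single u 1 + Finsupp.single v 1 with hsdef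
  have hjine : j ≠ i := ne_of_lt hji
  by_cases hsi : s i = 0
  · exact ⟨s, ⟨⟨u, v⟩, ⟨hum, huv, hvl⟩, rfl⟩, key_le0 s a i j hjine hsa hsi⟩
  · -- i = u or i = v
    have hiuv : i = u ∨ i = v := by
      by_contra h
      push_neg at h
      apply hsi
      simp [hsdef, Finsupp.single_apply, Ne.symm h.1, Ne.symm h.2]
    have hsi1 : 1 ≤ s i := Nat.one_le_iff_ne_zero.mpr hsi
    have hkey := key_le s a i j hjine hsa hsi1
    rcases hiuv with rfl | rfl
    on_goal 1 =>
      -- i = u; witness (j, v)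
      have hju : (j : ℕ) < (i : ℕ) := hji
      refine ⟨Finsupp.single j 1 + Finsupp.single v 1, ⟨⟨j, v⟩, ⟨?_, ?_, ?_⟩, rfl⟩, ?_⟩
      · exact lt_trans hju hum
      · exact le_of_lt (lt_of_lt_of_le hji huv)
      · calc (v : ℕ) < lam i := hvl
          _ ≤ lam j := hanti j i (le_of_lt hju) hum
      · have : Finsupp.single j 1 + Finsupp.single v 1 = s - Finsupp.single i 1 + Finsupp.single j 1 := by
          rw [hsdef, add_tsub_cancel_left, add_comm]
        rw [this]; exact hkey
    · -- i = v
      rcases le_total u j with huj | hju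
      · refine ⟨Finsupp.single u 1 + Finsupp.single j 1, ⟨⟨u, j⟩, ⟨hum, huj, ?_⟩, rfl⟩, ?_⟩
        · exact lt_trans (show (j:ℕ) < (i:ℕ) from hji) hvl
        · have : Finsupp.single u 1 + Finsupp.single j 1 = s - Finsupp.single i 1 + Finsupp.single j 1 := by
            rw [hsdef, add_tsub_cancel_right]
          rw [this]; exact hkey
      · refine ⟨Finsupp.single j 1 + Finsupp.single u 1, ⟨⟨j, u⟩, ⟨?_, hju, ?_⟩, rfl⟩, ?_⟩
        · exact lt_of_le_of_lt (show (j:ℕ) ≤ (u:ℕ) from hju) hum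
        · calc (u : ℕ) ≤ (i : ℕ) := huv
            _ < lam u := hvl
            _ ≤ lam j := hanti j u hju hum
        · have : Finsupp.single j 1 + Finsupp.single u 1 = s - Finsupp.single i 1 + Finsupp.single j 1 := by
            rw [hsdef, add_tsub_cancel_right, add_comm]
          rw [this]; exact hkey
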